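/- The function φ(x) = x ∫_x^∞ u^{-2} exp(−∫_1^u 2βz/σ²(z) dz) du, with β > 0 and σ continuous and positive on (0,∞), is convex on (0,∞), i.e. φ''(x) ≥ 0 wherever defined. -/

import Mathlib

open Set MeasureTheory

lemma phi_convex_aux (a : ℝ → ℝ) (haCont : ContinuousOn a (Ioi 0))
    (haNonneg : ∀ x ∈ Ioi (0:ℝ), 0 ≤ a x)
    (hint : ∀ x ∈ Ioi (0:ℝ), IntegrableOn
      (fun u => u⁻¹ ^ 2 * Real.exp (-∫ z in (1:ℝ)..u, a z)) (Ioi x)) :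
    ConvexOn ℝ (Ioi 0)
      (fun x => x * ∫ u in Ioi x, u⁻¹ ^ 2 * Real.exp (-∫ z in (1:ℝ)..u, a z)) := by
  set g : ℝ → ℝ := fun u => u⁻¹ ^ 2 * Real.exp (-∫ z in (1:ℝ)..u, a z) with hg_def
  -- subset facts
  have hsub : ∀ u : ℝ, 0 < u → uIcc (1:ℝ) u ⊆ Ioi 0 := by
    intro u hu z hz
    have h1 : min (1:ℝ) u ≤ z := hz.1
    have : (0:ℝ) < min 1 u := lt_min one_pos hu
    exact lt_of_lt_of_le this h1
  -- derivative of A u = ∫_1^u a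
  have hA : ∀ u : ℝ, 0 < u → HasDerivAt (fun v => ∫ z in (1:ℝ)..v, a z) (a u) u := by
    intro u hu
    apply intervalIntegral.integral_hasDerivAt_right
    · exact (haCont.mono (hsub u hu)).intervalIntegrable
    · exact haCont.stronglyMeasurableAtFilter isOpen_Ioi u hu
    · exact haCont.continuousAt (isOpen_Ioi.mem_nhds hu)
  -- derivative of g
  have hg : ∀ u : ℝ, 0 < u →
      HasDerivAt g ((2 * u⁻¹ ^ 1 * -(u ^ 2)⁻¹) * Real.exp (-∫ z in (1:ℝ)..u, a z)
        + u⁻¹ ^ 2 * (Real.exp (-∫ z in (1:ℝ)..u, a z) * -(a u))) u := by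
    intro u hu
    have h1 : HasDerivAt (fun v : ℝ => v⁻¹ ^ 2) (2 * u⁻¹ ^ 1 * -(u ^ 2)⁻¹) u := by
      have := (hasDerivAt_inv hu.ne').pow 2
      exact this.congr_deriv (by norm_num)
    have h2 : HasDerivAt (fun v => Real.exp (-∫ z in (1:ℝ)..v, a z))
        (Real.exp (-∫ z in (1:ℝ)..u, a z) * -(a u)) u := ((hA u hu).neg).exp
    exact h1.mul h2
  have hgCont : ContinuousOn g (Ioi 0) := fun u hu =>
    ((hg u hu).differentiableAt.continuousAt).continuousWithinAt
  -- derivative of F x = ∫_{Ioi x} g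
  have hF : ∀ x : ℝ, 0 < x → HasDerivAt (fun y => ∫ u in Ioi y, g u) (-(g x)) x := by
    intro x hx
    set c := x / 2 with hc_def
    have hc : 0 < c := by positivity
    have hcx : c < x := by simp [hc_def]; linarith
    have key : ∀ y ∈ Ioi c, (∫ u in Ioi y, g u)
        = (∫ u in Ioi c, g u) - ∫ u in c..y, g u := by
      intro y hy
      have hy' : c < y := hy
      have hyc : 0 < y := hc.trans hy'
      have hIc : IntegrableOn g (Ioi c) := hint c hc
      have hIocy : IntegrableOn g (Ioc c y) :=
        hIc.mono_set (Ioc_subset_Ioi_self)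
      have hIy : IntegrableOn g (Ioi y) := hint y hyc
      have hsplit : (∫ u in Ioi c, g u)
          = (∫ u in Ioc c y, g u) + ∫ u in Ioi y, g u := by
        rw [← setIntegral_union (Ioc_disjoint_Ioi le_rfl) measurableSet_Ioi hIocy hIy,
          Ioc_union_Ioi_eq_Ioi hy'.le]
      rw [intervalIntegral.integral_of_le hy'.le]
      linarith
    have hd : HasDerivAt (fun y => (∫ u in Ioi c, g u) - ∫ u in c..y, g u) (-(g x)) x := by
      have hii : IntervalIntegrable g volume c x :=
        (hgCont.mono (fun z hz => lt_of_lt_of_le (lt_min hc hx) hz.1)).intervalIntegrable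
      have := intervalIntegral.integral_hasDerivAt_right hii
        (hgCont.stronglyMeasurableAtFilter isOpen_Ioi x hx)
        (hgCont.continuousAt (isOpen_Ioi.mem_nhds hx))
      exact this.const_sub _
    apply hd.congr_of_eventuallyEq
    exact Filter.eventuallyEq_of_mem (isOpen_Ioi.mem_nhds hcx) key
  -- derivative of φ
  have hφ : ∀ x : ℝ, 0 < x → HasDerivAt (fun y => y * ∫ u in Ioi y, g u)
      ((∫ u in Ioi x, g u) - x * g x) x := by
    intro x hx
    have := (hasDerivAt_id x).mul (hF x hx)
    refine this.congr_deriv ?_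
    simp only [id_eq, one_mul]
    ring
  -- second derivative nonneg
  have hφ'' : ∀ x : ℝ, 0 < x → HasDerivAt (fun y => (∫ u in Ioi y, g u) - y * g y)
      (x⁻¹ * a x * Real.exp (-∫ z in (1:ℝ)..x, a z)) x := by
    intro x hx
    have h1 := (hF x hx).sub ((hasDerivAt_id x).mul (hg x hx))
    refine h1.congr_deriv ?_
    rw [hg_def]
    simp only [id_eq]
    field_simp
    ring
  have hcontφ : ContinuousOn (fun x => x * ∫ u in Ioi x, g u) (Ioi 0) := fun x hx =>
    ((hφ x hx).differentiableAt.continuousAt).continuousWithinAt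
  refine convexOn_of_hasDerivWithinAt2_nonneg (convex_Ioi 0) hcontφ
    (f' := fun x => (∫ u in Ioi x, g u) - x * g x)
    (f'' := fun x => x⁻¹ * a x * Real.exp (-∫ z in (1:ℝ)..x, a z)) ?_ ?_ ?_
  · intro x hx
    rw [interior_Ioi] at hx
    exact ((hφ x hx).hasDerivWithinAt)
  · intro x hx
    rw [interior_Ioi] at hx
    exact ((hφ'' x hx).hasDerivWithinAt)
  · intro x hx
    rw [interior_Ioi] at hx
    have := haNonneg x hx
    have hx' : (0:ℝ) ≤ x⁻¹ := inv_nonneg.mpr (le_of_lt hx)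
    exact mul_nonneg (mul_nonneg hx' this) (Real.exp_nonneg _)

/-- The decreasing solution
`φ(x) = x ∫_x^∞ u⁻² exp(−∫_1^u 2βz/σ²(z) dz) du` is convex on `(0, ∞)`. -/
theorem phi_convex (β : ℝ) (hβ : 0 < β) (σ : ℝ → ℝ)
    (hσcont : ContinuousOn σ (Ioi 0)) (hσpos : ∀ x ∈ Ioi (0:ℝ), 0 < σ x)
    (hint : ∀ x ∈ Ioi (0:ℝ), IntegrableOn
      (fun u => u⁻¹ ^ 2 * Real.exp (-∫ z in (1:ℝ)..u, 2 * β * z / σ z ^ 2)) (Ioi x)) :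
    ConvexOn ℝ (Ioi 0)
      (fun x => x * ∫ u in Ioi x,
        u⁻¹ ^ 2 * Real.exp (-∫ z in (1:ℝ)..u, 2 * β * z / σ z ^ 2)) := by
  have haCont : ContinuousOn (fun z => 2 * β * z / σ z ^ 2) (Ioi 0) := by
    apply ContinuousOn.div
    · exact (continuous_const.mul continuous_id).continuousOn
    · exact hσcont.pow 2
    · intro x hx
      exact pow_ne_zero _ (hσpos x hx).ne'
  have haNonneg : ∀ x ∈ Ioi (0:ℝ), 0 ≤ 2 * β * x / σ x ^ 2 := by
    intro x hx
    have hx' : (0:ℝ) < x := hx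
    have := hσpos x hx
    positivity
  exact phi_convex_aux (fun z => 2 * β * z / σ z ^ 2) haCont haNonneg hint
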